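/- At a vertex where the disagreement probability is maximal, its time derivative is strictly dissipative: if s ≥ 0 and x_k ∈ V(G) satisfies P(Z_s(x_k)=1) ≥ P(Z_s(v)=1) for every vertex v ∈ V(G), then the derivative at t = s of the function t ↦ P(Z_t(x_k)=1) is at most −(2δ/(2δ+1))·P(Z_s(x_k)=1). -/

import Mathlib

open Finset

/-- Flip rate of the disagreement chain of the noisy voter model at vertex `v` in
configuration `η`: `(2δ/(2δ+1))·1{η(v)=1} + (1/(2δ+1))·(1/d(v))·#{u ~ v : η(u) ≠ η(v)}`. -/
noncomputable def dzRate {V : Type*} [Fintype V] (G : SimpleGraph V) [DecidableRel G.Adj]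
    (δ : ℝ) (v : V) (η : V → Bool) : ℝ :=
  (2 * δ / (2 * δ + 1)) * (if η v = true then 1 else 0) +
    (1 / (2 * δ + 1)) * (1 / (G.degree v : ℝ)) *
      ((Finset.univ.filter fun u => G.Adj v u ∧ η u ≠ η v).card : ℝ)

/-- The rate matrix of the disagreement chain: single-spin flips occur at rate `dzRate`,
transitions changing two or more spins have rate `0`, and diagonal entries make rows sum to `0`. -/
noncomputable def dzQ {V : Type*} [Fintype V] [DecidableEq V] (G : SimpleGraph V)
    [DecidableRel G.Adj] (δ : ℝ) : Matrix (V → Bool) (V → Bool) ℝ := fun η η' =>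
  if η = η' then -∑ v, dzRate G δ v η
  else if (Finset.univ.filter fun v => η v ≠ η' v).card = 1 then
    ∑ v ∈ Finset.univ.filter (fun v => η v ≠ η' v), dzRate G δ v η
  else 0

/-- `P(Z_t(v) = 1)`: the probability that the disagreement chain started from the all-ones
configuration has a disagreement (spin `1`) at vertex `v` at time `t`. -/
noncomputable def probDisagree {V : Type*} [Fintype V] [DecidableEq V] (G : SimpleGraph V)
    [DecidableRel G.Adj] (δ : ℝ) (t : ℝ) (v : V) : ℝ :=
  ∑ η ∈ Finset.univ.filter (fun η : V → Bool => η v = true),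
    NormedSpace.exp (t • dzQ G δ) (fun _ => true) η

open Finset

lemma sum_dzQ_row {V : Type*} [Fintype V] [DecidableEq V] (G : SimpleGraph V)
    [DecidableRel G.Adj] (δ : ℝ) (x : V) (η : V → Bool) :
    ∑ η' ∈ Finset.univ.filter (fun η' : V → Bool => η' x = true), dzQ G δ η η' =
      if η x = true then -(dzRate G δ x η) else dzRate G δ x η := by
  classical
  set e : V → (V → Bool) := fun v => Function.update η v (!η v) with he
  have he_apply : ∀ v u, e v u = if u = v then !η v else η u := by
    intro v u; by_cases h : u = v <;> simp [he, Function.update, h]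
  have he_ne : ∀ v, e v ≠ η := by
    intro v h
    have := congrFun h v
    rw [he_apply] at this; simp at this
  have he_inj : Function.Injective e := by
    intro v w h
    by_contra hvw
    have h1 := congrFun h v
    rw [he_apply, he_apply] at h1
    simp [hvw] at h1
  have hdiff : ∀ v, Finset.univ.filter (fun u => η u ≠ e v u) = {v} := by
    intro v; ext u
    by_cases h : u = v <;> simp [he_apply, h]
  have hQ_e : ∀ v, dzQ G δ η (e v) = dzRate G δ v η := by
    intro v
    rw [dzQ]
    rw [if_neg (fun h => he_ne v h.symm)]
    rw [hdiff]
    simp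
  have hQ_zero : ∀ η', η' ≠ η → (∀ v, η' ≠ e v) → dzQ G δ η η' = 0 := by
    intro η' h1 h2
    rw [dzQ, if_neg (Ne.symm h1), if_neg]
    intro hcard
    obtain ⟨v, hv⟩ := Finset.card_eq_one.mp hcard
    apply h2 v
    funext u
    by_cases h : u = v
    · subst h
      have hu : η u ≠ η' u := by
        have : u ∈ ({u} : Finset V) := Finset.mem_singleton_self u
        rw [← hv] at this; simpa using this
      rw [he_apply]; simp
      cases hηu : η u <;> cases hη'u : η' u <;> simp_all
    · have hu : η u = η' u := by
        by_contra hne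
        have : u ∈ Finset.univ.filter (fun w => η w ≠ η' w) := by simpa using hne
        rw [hv] at this; exact h (Finset.mem_singleton.mp this)
      rw [he_apply, if_neg h, hu]
  set A := Finset.univ.filter (fun η' : V → Bool => η' x = true) with hA
  set B := (insert η (Finset.univ.image e)).filter (fun η' : V → Bool => η' x = true) with hB
  have hBA : B ⊆ A := Finset.filter_subset_filter _ (Finset.subset_univ _)
  have hZ : ∀ η' ∈ A, η' ∉ B → dzQ G δ η η' = 0 := by
    intro η' hmemA hmemB
    apply hQ_zero
    · intro h; subst h
      exact hmemB (Finset.mem_filter.mpr ⟨Finset.mem_insert_self _ _, (Finset.mem_filter.mp hmemA).2⟩)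
    · intro v h; subst h
      exact hmemB (Finset.mem_filter.mpr ⟨Finset.mem_insert_of_mem
        (Finset.mem_image_of_mem e (Finset.mem_univ v)), (Finset.mem_filter.mp hmemA).2⟩)
  rw [← Finset.sum_subset hBA hZ]
  have hη_not_img : η ∉ Finset.univ.image e := by
    intro h
    obtain ⟨v, _, hv⟩ := Finset.mem_image.mp h
    exact he_ne v hv
  by_cases hx : η x = true
  · rw [hB, Finset.filter_insert, if_pos hx]
    rw [Finset.sum_insert (by
      intro h
      exact hη_not_img (Finset.mem_of_mem_filter _ h))]
    rw [Finset.filter_image, Finset.sum_image (fun a _ b _ h => he_inj h)]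
    have hT : Finset.univ.filter (fun v => e v x = true) = Finset.univ.erase x := by
      ext v
      by_cases h : x = v
      · subst h; simp [he_apply, hx]
      · simp [he_apply, h, hx, Ne.symm h]
    rw [hT]
    have hdiag : dzQ G δ η η = -∑ v, dzRate G δ v η := by rw [dzQ, if_pos rfl]
    rw [hdiag, if_pos hx]
    have : ∀ v ∈ Finset.univ.erase x, dzQ G δ η (e v) = dzRate G δ v η := fun v _ => hQ_e v
    rw [Finset.sum_congr rfl this, Finset.sum_erase_eq_sub (Finset.mem_univ x)]
    ring
  · rw [hB, Finset.filter_insert, if_neg hx]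
    rw [Finset.filter_image, Finset.sum_image (fun a _ b _ h => he_inj h)]
    have hT : Finset.univ.filter (fun v => e v x = true) = {x} := by
      ext v
      by_cases h : x = v
      · subst h; simp only [Bool.not_eq_true] at hx; simp [he_apply, hx]
      · simp only [Bool.not_eq_true] at hx; simp [he_apply, h, hx, Ne.symm h]
    rw [hT, Finset.sum_singleton, hQ_e, if_neg hx]
lemma hasDerivAt_probDisagree {V : Type*} [Fintype V] [DecidableEq V] (G : SimpleGraph V)
    [DecidableRel G.Adj] (δ : ℝ) (s : ℝ) (v : V) :
    HasDerivAt (fun t => probDisagree G δ t v)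
      (∑ η' ∈ Finset.univ.filter (fun η' : V → Bool => η' v = true),
        (NormedSpace.exp (s • dzQ G δ) * dzQ G δ) (fun _ => true) η') s := by
  have key : ∀ η' : V → Bool,
      HasDerivAt (fun t : ℝ => NormedSpace.exp (t • dzQ G δ) (fun _ => true) η')
        ((NormedSpace.exp (s • dzQ G δ) * dzQ G δ) (fun _ => true) η') s := by
    intro η'
    letI : SeminormedRing (Matrix (V → Bool) (V → Bool) ℝ) := Matrix.linftyOpSemiNormedRing
    letI : NormedRing (Matrix (V → Bool) (V → Bool) ℝ) := Matrix.linftyOpNormedRing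
    letI : NormedAlgebra ℝ (Matrix (V → Bool) (V → Bool) ℝ) := Matrix.linftyOpNormedAlgebra
    have h := hasDerivAt_exp_smul_const (𝕂 := ℝ) (dzQ G δ) s
    let l : Matrix (V → Bool) (V → Bool) ℝ →ₗ[ℝ] ℝ :=
      { toFun := fun M => M (fun _ => true) η', map_add' := fun _ _ => rfl,
        map_smul' := fun _ _ => rfl }
    have := (LinearMap.toContinuousLinearMap l).hasFDerivAt.comp_hasDerivAt s h
    exact this
  simp only [probDisagree]
  exact HasDerivAt.fun_sum (fun η' _ => key η')

/-- At a vertex where the disagreement probability is maximal, the time derivative of the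
disagreement probability is strictly dissipative: if `P(Z_s(x_k)=1) ≥ P(Z_s(v)=1)` for all
vertices `v`, then `(d/dt P(Z_t(x_k)=1))|_{t=s} ≤ −(2δ/(2δ+1))·P(Z_s(x_k)=1)`. -/
theorem disagreement_derivative_at_maximizer
    {V : Type*} [Fintype V] [DecidableEq V] (δ : ℝ) (hδ : 0 < δ)
    (G : SimpleGraph V) [DecidableRel G.Adj] (hdeg : ∀ v, 1 ≤ G.degree v)
    (s : ℝ) (hs : 0 ≤ s) (x_k : V)
    (hmax : ∀ v : V, probDisagree G δ s v ≤ probDisagree G δ s x_k) :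
    deriv (fun t => probDisagree G δ t x_k) s ≤
      -(2 * δ / (2 * δ + 1)) * probDisagree G δ s x_k := by
  classical
  have hD := hasDerivAt_probDisagree G δ s x_k
  rw [hD.deriv]
  set p : (V → Bool) → ℝ := fun η => NormedSpace.exp (s • dzQ G δ) (fun _ => true) η with hp
  set a : ℝ := 2 * δ / (2 * δ + 1) with ha
  set dr : ℝ := (G.degree x_k : ℝ) with hdr
  set c0 : ℝ := 1 / (2 * δ + 1) * (1 / dr) with hc0
  set Nx : Finset V := Finset.univ.filter (fun u => G.Adj x_k u) with hNx
  set M : (V → Bool) → ℝ := fun η => ((Nx.filter (fun u => η u = true)).card : ℝ) with hM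
  have hdcard : (Nx.card : ℝ) = dr := by
    rw [hNx, hdr, SimpleGraph.degree]
    congr 1
    rw [SimpleGraph.neighborFinset_eq_filter]
  -- Step 1: rewrite derivative as a single sum
  have h1 : ∑ η' ∈ Finset.univ.filter (fun η' : V → Bool => η' x_k = true),
      (NormedSpace.exp (s • dzQ G δ) * dzQ G δ) (fun _ => true) η'
      = ∑ η : V → Bool,
          p η * (if η x_k = true then -(dzRate G δ x_k η) else dzRate G δ x_k η) := by
    simp only [Matrix.mul_apply]
    rw [Finset.sum_comm]
    refine Finset.sum_congr rfl fun η _ => ?_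
    rw [← Finset.mul_sum, sum_dzQ_row]
  rw [h1]
  -- rate formulas
  have hcard_true : ∀ η : V → Bool, η x_k = true →
      ((Finset.univ.filter fun u => G.Adj x_k u ∧ η u ≠ η x_k).card : ℝ) = dr - M η := by
    intro η hη
    have hfilter : (Finset.univ.filter fun u => G.Adj x_k u ∧ η u ≠ η x_k)
        = Nx.filter (fun u => ¬ (η u = true)) := by
      rw [hNx, Finset.filter_filter]
      apply Finset.filter_congr
      intro u _
      simp [hη]
    have hq := Finset.card_filter_add_card_filter_not (s := Nx)
      (p := fun u => η u = true)
    rw [hfilter]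
    rw [← hdcard, hM]
    push_cast [← hq]
    ring
  have hcard_false : ∀ η : V → Bool, η x_k = false →
      ((Finset.univ.filter fun u => G.Adj x_k u ∧ η u ≠ η x_k).card : ℝ) = M η := by
    intro η hη
    have hfilter : (Finset.univ.filter fun u => G.Adj x_k u ∧ η u ≠ η x_k)
        = Nx.filter (fun u => η u = true) := by
      rw [hNx, Finset.filter_filter]
      apply Finset.filter_congr
      intro u _
      simp [hη]
    rw [hfilter, hM]
  have hrate_true : ∀ η : V → Bool, η x_k = true →
      dzRate G δ x_k η = a + c0 * (dr - M η) := by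
    intro η hη
    rw [dzRate, if_pos hη, hcard_true η hη, ha, hc0, hdr]
    ring
  have hrate_false : ∀ η : V → Bool, η x_k = false →
      dzRate G δ x_k η = c0 * M η := by
    intro η hη
    rw [dzRate, if_neg (by simp [hη]), hcard_false η hη, hc0, hdr]
    ring
  -- split the sum
  set T : Finset (V → Bool) := Finset.univ.filter (fun η : V → Bool => η x_k = true) with hT
  have hP : probDisagree G δ s x_k = ∑ η ∈ T, p η := rfl
  have hsplit := Finset.sum_filter_add_sum_filter_not Finset.univ
    (fun η : V → Bool => η x_k = true)
    (fun η => p η * (if η x_k = true then -(dzRate G δ x_k η) else dzRate G δ x_k η))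
  rw [← hsplit]
  have hTsum : ∑ η ∈ T, p η * (if η x_k = true then -(dzRate G δ x_k η) else dzRate G δ x_k η)
      = ∑ η ∈ T, ((-a - c0 * dr) * p η + c0 * (p η * M η)) := by
    refine Finset.sum_congr rfl fun η hη => ?_
    have hηt : η x_k = true := (Finset.mem_filter.mp hη).2
    rw [if_pos hηt, hrate_true η hηt]
    ring
  have hFsum : ∑ η ∈ Finset.univ.filter (fun η : V → Bool => ¬ η x_k = true),
      p η * (if η x_k = true then -(dzRate G δ x_k η) else dzRate G δ x_k η)
      = ∑ η ∈ Finset.univ.filter (fun η : V → Bool => ¬ η x_k = true), c0 * (p η * M η) := by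
    refine Finset.sum_congr rfl fun η hη => ?_
    have hηf : η x_k = false := by
      have := (Finset.mem_filter.mp hη).2
      simpa using this
    rw [if_neg (by simp [hηf]), hrate_false η hηf]
    ring
  rw [hTsum, hFsum]
  rw [Finset.sum_add_distrib, ← Finset.mul_sum, ← Finset.mul_sum, ← Finset.mul_sum]
  rw [add_assoc, ← mul_add]
  have hMsum : (∑ η ∈ T, p η * M η) + ∑ η ∈ Finset.univ.filter (fun η : V → Bool => ¬ η x_k = true),
      p η * M η = ∑ u ∈ Nx, probDisagree G δ s u := by
    rw [hT, Finset.sum_filter_add_sum_filter_not]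
    have : ∀ η : V → Bool, p η * M η = ∑ u ∈ Nx, (if η u = true then p η else 0) := by
      intro η
      simp only [hM]
      rw [Finset.card_filter]
      push_cast
      rw [Finset.mul_sum]
      refine Finset.sum_congr rfl fun u _ => ?_
      by_cases h : η u = true <;> simp [h]
    simp only [this]
    rw [Finset.sum_comm]
    refine Finset.sum_congr rfl fun u _ => ?_
    rw [probDisagree, Finset.sum_filter]
  rw [hMsum, ← hP]
  have hpos : (0:ℝ) < 2 * δ + 1 := by linarith
  have hc0nn : 0 ≤ c0 := by
    rw [hc0, hdr]
    positivity
  have hS : ∑ u ∈ Nx, probDisagree G δ s u ≤ dr * probDisagree G δ s x_k := by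
    calc ∑ u ∈ Nx, probDisagree G δ s u ≤ ∑ _u ∈ Nx, probDisagree G δ s x_k :=
          Finset.sum_le_sum (fun u _ => hmax u)
      _ = dr * probDisagree G δ s x_k := by
          rw [Finset.sum_const, ← hdcard, nsmul_eq_mul]
  have hmul := mul_le_mul_of_nonneg_left hS hc0nn
  linarith
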